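/- arXiv:2109.05111 — 7 statements merged into one kernel-verified Lean document; each statement's English description precedes it below -/
import Mathlib

section
/- Let C be an additive category in which every morphism has a pseudokernel and a pseudocokernel, and let B be a full subcategory of C. If B is coreflective, then B is precovering, closed under taking direct summands, and every morphism between objects of B has a pseudocokernel in C that belongs to B. Conversely, if moreover C has split idempotents, then any full subcategory B that is precovering, closed under taking direct summands, and such that every morphism between objects of B has a pseudocokernel in C belonging to B, is coreflective. -/
open CategoryTheory Limits

universe w v u

namespace PaperStmt

variable {C : Type u} [Category.{v} C]

/-- The subcategory (object property) `B` is closed under isomorphisms. -/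
def ClosedUnderIso (B : C → Prop) : Prop :=
  ∀ ⦃X Y : C⦄, (X ≅ Y) → B X → B Y

/-- `B` is closed under direct summands (retracts). -/
def ClosedUnderSummands (B : C → Prop) : Prop :=
  ∀ ⦃X Y : C⦄, B X → (∃ (s : Y ⟶ X) (r : X ⟶ Y), s ≫ r = 𝟙 Y) → B Y

/-- `f : X ⟶ A` is a `B`-precover of `A`. -/
def IsPrecover (B : C → Prop) {X A : C} (f : X ⟶ A) : Prop :=
  B X ∧ ∀ ⦃Y : C⦄, B Y → ∀ g : Y ⟶ A, ∃ h : Y ⟶ X, h ≫ f = g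

/-- `B` is a precovering subcategory. -/
def Precovering (B : C → Prop) : Prop :=
  ∀ A : C, ∃ (X : C) (f : X ⟶ A), IsPrecover B f

/-- `f : A ⟶ X` is a `B`-preenvelope of `A`. -/
def IsPreenvelope (B : C → Prop) {A X : C} (f : A ⟶ X) : Prop :=
  B X ∧ ∀ ⦃Y : C⦄, B Y → ∀ g : A ⟶ Y, ∃ h : X ⟶ Y, f ≫ h = g

/-- `B` is a preenveloping subcategory. -/
def Preenveloping (B : C → Prop) : Prop :=
  ∀ A : C, ∃ (X : C) (f : A ⟶ X), IsPreenvelope B f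

/-- `f : X ⟶ A` is a `B`-coreflection of `A`. -/
def IsCoreflection (B : C → Prop) {X A : C} (f : X ⟶ A) : Prop :=
  B X ∧ ∀ ⦃Y : C⦄, B Y → ∀ g : Y ⟶ A, ∃! h : Y ⟶ X, h ≫ f = g

/-- `B` is a coreflective subcategory: the inclusion has a right adjoint. -/
def IsCoreflectiveSub (B : C → Prop) : Prop :=
  (ObjectProperty.ι B).IsLeftAdjoint

/-- `B` is a reflective subcategory: the inclusion has a left adjoint. -/
def IsReflectiveSub (B : C → Prop) : Prop :=
  (ObjectProperty.ι B).IsRightAdjoint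

section Zero

variable [HasZeroMorphisms C]

/-- `k` is a pseudokernel of `f`. -/
def IsPseudokernel {K X Y : C} (f : X ⟶ Y) (k : K ⟶ X) : Prop :=
  k ≫ f = 0 ∧ ∀ ⦃K' : C⦄ (k' : K' ⟶ X), k' ≫ f = 0 → ∃ t : K' ⟶ K, t ≫ k = k'

/-- `c` is a pseudocokernel of `f`. -/
def IsPseudocokernel {X Y Q : C} (f : X ⟶ Y) (c : Y ⟶ Q) : Prop :=
  f ≫ c = 0 ∧ ∀ ⦃Q' : C⦄ (c' : Y ⟶ Q'), f ≫ c' = 0 → ∃ t : Q ⟶ Q', c ≫ t = c'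

end Zero

/-- `C` has pseudokernels. -/
def HasPseudokernels (C : Type u) [Category.{v} C] [HasZeroMorphisms C] : Prop :=
  ∀ ⦃X Y : C⦄ (f : X ⟶ Y), ∃ (K : C) (k : K ⟶ X), IsPseudokernel f k

/-- `C` has pseudocokernels. -/
def HasPseudocokernels (C : Type u) [Category.{v} C] [HasZeroMorphisms C] : Prop :=
  ∀ ⦃X Y : C⦄ (f : X ⟶ Y), ∃ (Q : C) (c : Y ⟶ Q), IsPseudocokernel f c

end PaperStmt

namespace PaperStmt

section Helpers

variable {C : Type u} [Category.{v} C]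

/-- Auxiliary: pointwise coreflections give a right adjoint to the inclusion. -/
lemma aux_coreflective_of_coreflections (B : C → Prop)
    (h : ∀ A : C, ∃ (X : C) (f : X ⟶ A), IsCoreflection B f) :
    IsCoreflectiveSub B := by
  have : ∀ A : C, HasTerminal (CostructuredArrow (ObjectProperty.ι B) A) := by
    intro A
    obtain ⟨X, f, hX, hf⟩ := h A
    let T : CostructuredArrow (ObjectProperty.ι B) A :=
      CostructuredArrow.mk
        (show (ObjectProperty.ι B).obj ⟨X, hX⟩ ⟶ A from f)
    have : IsTerminal T := by
      refine IsTerminal.ofUniqueHom (fun Z => ?_) (fun Z m => ?_)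
      · exact CostructuredArrow.homMk (ObjectProperty.homMk (hf Z.left.2 Z.hom).exists.choose)
          (show (ObjectProperty.ι B).map _ ≫ T.hom = Z.hom from
            (hf Z.left.2 Z.hom).exists.choose_spec)
      · ext
        exact (hf Z.left.2 Z.hom).unique (CostructuredArrow.w m)
          (hf Z.left.2 Z.hom).exists.choose_spec
    exact this.hasTerminal
  exact isLeftAdjoint_of_costructuredArrowTerminals _

/-- Auxiliary: a coreflective subcategory has pointwise coreflections. -/
lemma aux_coreflections_of_coreflective (B : C → Prop)
    (h : IsCoreflectiveSub B) (A : C) :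
    ∃ (X : C) (f : X ⟶ A), IsCoreflection B f := by
  have h' : (ObjectProperty.ι B).IsLeftAdjoint := h
  let adj := Adjunction.ofIsLeftAdjoint (ObjectProperty.ι B)
  let R := (ObjectProperty.ι B).rightAdjoint
  refine ⟨(R.obj A).obj, adj.counit.app A, (R.obj A).2, ?_⟩
  intro Y hY g
  have key : ∀ h : (⟨Y, hY⟩ : ObjectProperty.FullSubcategory B) ⟶ R.obj A,
      ((h.hom ≫ adj.counit.app A : Y ⟶ A) = (adj.homEquiv ⟨Y, hY⟩ A).symm h) := by
    intro h
    rw [Adjunction.homEquiv_counit]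
    rfl
  refine ⟨(adj.homEquiv ⟨Y, hY⟩ A g).hom, ?_, ?_⟩
  · show ((adj.homEquiv ⟨Y, hY⟩ A g).hom ≫ adj.counit.app A : Y ⟶ A) = g
    rw [key]
    exact (adj.homEquiv ⟨Y, hY⟩ A).symm_apply_apply g
  · intro y hy
    have : (adj.homEquiv ⟨Y, hY⟩ A).symm (ObjectProperty.homMk y) = g :=
        (key (ObjectProperty.homMk y)).symm.trans hy
    exact congrArg InducedCategory.Hom.hom ((adj.homEquiv ⟨Y, hY⟩ A).symm_apply_eq.mp this)

end Helpers

/-- Theorem 3.1: characterization of coreflective subcategories of an additive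
category with pseudokernels and pseudocokernels. -/
theorem coreflective_characterization
    {C : Type u} [Category.{v} C] [Preadditive C] [HasFiniteBiproducts C]
    (hpk : HasPseudokernels C) (hpc : HasPseudocokernels C)
    (B : C → Prop) (hiso : ClosedUnderIso B) :
    (IsCoreflectiveSub B →
      Precovering B ∧ ClosedUnderSummands B ∧
        ∀ ⦃X Y : C⦄, B X → B Y → ∀ f : X ⟶ Y,
          ∃ (Q : C) (c : Y ⟶ Q), B Q ∧ IsPseudocokernel f c) ∧
    (IsIdempotentComplete C →
      (Precovering B ∧ ClosedUnderSummands B ∧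
        ∀ ⦃X Y : C⦄, B X → B Y → ∀ f : X ⟶ Y,
          ∃ (Q : C) (c : Y ⟶ Q), B Q ∧ IsPseudocokernel f c) →
      IsCoreflectiveSub B) := by
  constructor
  · -- Forward direction
    intro hc
    have cor := aux_coreflections_of_coreflective B hc
    refine ⟨?_, ?_, ?_⟩
    · -- Precovering
      intro A
      obtain ⟨X, f, hX, hf⟩ := cor A
      exact ⟨X, f, hX, fun Y hY g => (hf hY g).exists⟩
    · -- Closed under summands
      intro X Y hX hret
      obtain ⟨s, r, hsr⟩ := hret
      obtain ⟨W, f, hW, hf⟩ := cor Y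
      obtain ⟨r', hr'⟩ := (hf hX r).exists
      have hg : (s ≫ r') ≫ f = 𝟙 Y := by rw [Category.assoc, hr', hsr]
      have hid : f ≫ (s ≫ r') = 𝟙 W := by
        have h1 : (f ≫ (s ≫ r')) ≫ f = f := by
          rw [Category.assoc, hg, Category.comp_id]
        exact (hf hW f).unique h1 (Category.id_comp f)
      exact hiso ⟨f, s ≫ r', hid, hg⟩ hW
    · -- pseudocokernels in B
      intro X Y hX hY f
      obtain ⟨Q0, c0, hc00, hfac0⟩ := hpc f
      obtain ⟨Q, ε, hQ, hε⟩ := cor Q0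
      obtain ⟨c1, hc1⟩ := (hε hY c0).exists
      refine ⟨Q, c1, hQ, ?_, ?_⟩
      · have h1 : (f ≫ c1) ≫ ε = f ≫ c0 := by rw [Category.assoc, hc1]
        have h2 : (0 : X ⟶ Q) ≫ ε = f ≫ c0 := by rw [zero_comp, hc00]
        exact (hε hX (f ≫ c0)).unique h1 h2
      · intro Q' c' hc'
        obtain ⟨t, ht⟩ := hfac0 c' hc'
        exact ⟨ε ≫ t, by rw [← Category.assoc, hc1, ht]⟩
  · -- Converse direction
    intro hic hyp
    obtain ⟨hpre, hsum, hpcB⟩ := hyp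
    refine aux_coreflective_of_coreflections B (fun A => ?_)
    obtain ⟨X, f, hX, hfpre⟩ := hpre A
    obtain ⟨K, k, hk0, hkfac⟩ := hpk f
    obtain ⟨X', g, hX', hgpre⟩ := hpre K
    obtain ⟨Q, c, hQ, huc0, hufac⟩ := hpcB hX' hX (g ≫ k)
    obtain ⟨fbar, hfbar⟩ := hufac f (by rw [Category.assoc, hk0, comp_zero])
    obtain ⟨s, hs⟩ := hfpre hQ fbar
    have h1 : (𝟙 X - c ≫ s) ≫ f = 0 := by
      rw [Preadditive.sub_comp, Category.id_comp, Category.assoc, hs, hfbar, sub_self]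
    obtain ⟨v, hv⟩ := hkfac _ h1
    obtain ⟨v', hv'⟩ := hgpre hX v
    have hvgk : v' ≫ (g ≫ k) = 𝟙 X - c ≫ s := by rw [← Category.assoc, hv', hv]
    have hzc : (𝟙 X - c ≫ s) ≫ c = 0 := by
      rw [← hvgk, Category.assoc, huc0, comp_zero]
    have hce : c ≫ s ≫ c = c := by
      rw [Preadditive.sub_comp, Category.id_comp, Category.assoc, sub_eq_zero] at hzc
      exact hzc.symm
    have he : (s ≫ c) ≫ (s ≫ c) = s ≫ c := by
      simp only [Category.assoc]
      rw [hce]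
    have hef : (s ≫ c) ≫ fbar = fbar := by
      rw [Category.assoc, hfbar, hs]
    obtain ⟨Q', i, p, hip, hpi⟩ := hic.idempotents_split Q (s ≫ c) he
    have hQ' : B Q' := hsum hQ ⟨i, p, hip⟩
    refine ⟨Q', i ≫ fbar, hQ', ?_⟩
    intro Y hY g0
    obtain ⟨h₁, hh₁⟩ := hfpre hY g0
    have hex : (h₁ ≫ c ≫ p) ≫ (i ≫ fbar) = g0 := by
      have hpif : p ≫ i ≫ fbar = fbar := by rw [← Category.assoc, hpi, hef]
      rw [Category.assoc, Category.assoc, hpif, hfbar, hh₁]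
    have hvan : ∀ (t : Y ⟶ Q'), t ≫ (i ≫ fbar) = 0 → t = 0 := by
      intro t ht
      have hwf : (t ≫ i) ≫ fbar = 0 := by rw [Category.assoc]; exact ht
      have hws : ((t ≫ i) ≫ s) ≫ f = 0 := by
        rw [Category.assoc, hs, hwf]
      obtain ⟨z, hz1⟩ := hkfac _ hws
      obtain ⟨z', hz'⟩ := hgpre hY z
      have hwe : (t ≫ i) ≫ (s ≫ c) = 0 := by
        rw [← Category.assoc, ← hz1, ← hz', Category.assoc, Category.assoc,
          ← Category.assoc g k c, huc0, comp_zero]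
      have h2 : ((t ≫ i) ≫ (s ≫ c)) ≫ p = 0 := by rw [hwe, zero_comp]
      rw [← hpi] at h2
      simp only [Category.assoc, hip, Category.comp_id] at h2
      exact h2
    refine ⟨h₁ ≫ c ≫ p, hex, fun y hy => ?_⟩
    have hsub : (y - h₁ ≫ c ≫ p) ≫ (i ≫ fbar) = 0 := by
      rw [Preadditive.sub_comp, hy, hex, sub_self]
    exact sub_eq_zero.mp (hvan _ hsub)


end PaperStmt
end

section
/- Let C be an additive category in which every morphism has a pseudokernel and a pseudocokernel, and let B be a full subcategory of C. If B is reflective, then B is preenveloping, closed under taking direct summands, and every morphism between objects of B has a pseudokernel in C that belongs to B. Conversely, if moreover C has split idempotents, then any full subcategory B that is preenveloping, closed under taking direct summands, and such that every morphism between objects of B has a pseudokernel in C belonging to B, is reflective. -/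
open CategoryTheory Limits

universe w v u

namespace PaperStmt

lemma isReflectiveSub_of_reflections {C : Type u} [Category.{v} C] (B : C → Prop)
    (h : ∀ A : C, ∃ (X : C) (_ : B X) (f : A ⟶ X),
        ∀ ⦃Y : C⦄, B Y → ∀ g : A ⟶ Y, ∃! t : X ⟶ Y, f ≫ t = g) :
    IsReflectiveSub B := by
  have : ∀ A : C, HasInitial (StructuredArrow A (ObjectProperty.ι B)) := by
    intro A
    obtain ⟨X, hX, f, hf⟩ := h A
    have : IsInitial (StructuredArrow.mk (Y := ObjectProperty.FullSubcategory.mk X hX)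
        (T := ObjectProperty.ι B) f) := by
      refine IsInitial.ofUniqueHom
        (fun Z => StructuredArrow.homMk (ObjectProperty.homMk (hf Z.right.2 Z.hom).choose)
          (by simpa using (hf Z.right.2 Z.hom).choose_spec.1)) ?_
      intro Z m
      apply StructuredArrow.hom_ext
      exact ObjectProperty.hom_ext _ ((hf Z.right.2 Z.hom).choose_spec.2 m.right.hom (by simpa using StructuredArrow.w m))
    exact this.hasInitial
  exact isRightAdjointOfStructuredArrowInitials _

lemma reflections_of_isReflectiveSub {C : Type u} [Category.{v} C] (B : C → Prop)
    (h : IsReflectiveSub B) :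
    ∀ A : C, ∃ (X : C) (_ : B X) (f : A ⟶ X),
        ∀ ⦃Y : C⦄, B Y → ∀ g : A ⟶ Y, ∃! t : X ⟶ Y, f ≫ t = g := by
  obtain ⟨L, ⟨adj⟩⟩ := h.exists_leftAdjoint
  intro A
  refine ⟨(L.obj A).obj, (L.obj A).property, adj.unit.app A, ?_⟩
  intro Y hY g
  refine ⟨((adj.homEquiv A ⟨Y, hY⟩).symm g).hom, ?_, ?_⟩
  · have := adj.homEquiv_unit (X := A) (Y := ⟨Y, hY⟩) (f := (adj.homEquiv A ⟨Y, hY⟩).symm g)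
    rw [Equiv.apply_symm_apply] at this
    exact this.symm
  · intro t ht
    have h2 : (adj.homEquiv A ⟨Y, hY⟩) (ObjectProperty.homMk t) = g := by
      rw [adj.homEquiv_unit]; exact ht
    have := congrArg (adj.homEquiv A ⟨Y, hY⟩).symm h2
    simpa using congrArg (·.hom) this


/-- Theorem 3.2: characterization of reflective subcategories of an additive
category with pseudokernels and pseudocokernels. -/
theorem reflective_characterization
    {C : Type u} [Category.{v} C] [Preadditive C] [HasFiniteBiproducts C]
    (hpk : HasPseudokernels C) (hpc : HasPseudocokernels C)
    (B : C → Prop) (hiso : ClosedUnderIso B) :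
    (IsReflectiveSub B →
      Preenveloping B ∧ ClosedUnderSummands B ∧
        ∀ ⦃X Y : C⦄, B X → B Y → ∀ f : X ⟶ Y,
          ∃ (K : C) (k : K ⟶ X), B K ∧ IsPseudokernel f k) ∧
    (IsIdempotentComplete C →
      (Preenveloping B ∧ ClosedUnderSummands B ∧
        ∀ ⦃X Y : C⦄, B X → B Y → ∀ f : X ⟶ Y,
          ∃ (K : C) (k : K ⟶ X), B K ∧ IsPseudokernel f k) →
      IsReflectiveSub B) := by
  constructor
  · intro hrefl
    have hrfl := reflections_of_isReflectiveSub B hrefl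
    refine ⟨?_, ?_, ?_⟩
    · -- preenveloping
      intro A
      obtain ⟨X, hX, f, hf⟩ := hrfl A
      exact ⟨X, f, hX, fun Y hY g => ⟨(hf hY g).choose, (hf hY g).choose_spec.1⟩⟩
    · -- closed under summands
      intro X Y hX ⟨s, r, hsr⟩
      obtain ⟨Z, hZ, η, hη⟩ := hrfl Y
      obtain ⟨t, ht, -⟩ := hη hX s
      have h1 : η ≫ (t ≫ r) = 𝟙 Y := by rw [← Category.assoc, ht, hsr]
      have h2 : (t ≫ r) ≫ η = 𝟙 Z := by
        have := hη hZ η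
        refine (this.unique ?_ ?_)
        · rw [← Category.assoc, h1, Category.id_comp]
        · rw [Category.comp_id]
      exact hiso ⟨t ≫ r, η, h2, h1⟩ hZ
    · -- pseudokernels in B
      intro X Y hX hY f
      obtain ⟨K, k, hk0, hkfac⟩ := hpk f
      obtain ⟨RK, hRK, η, hη⟩ := hrfl K
      obtain ⟨k', hk', -⟩ := hη hX k
      have hk'0 : k' ≫ f = 0 := by
        refine (hη hY (0 : K ⟶ Y)).unique ?_ (by simp)
        rw [← Category.assoc, hk']; exact hk0
      refine ⟨RK, k', hRK, hk'0, ?_⟩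
      intro K'' k'' h0
      obtain ⟨t, ht⟩ := hkfac k'' h0
      exact ⟨t ≫ η, by rw [Category.assoc, hk', ht]⟩
  · rintro hic ⟨henv, hsum, hker⟩
    apply isReflectiveSub_of_reflections
    intro A
    obtain ⟨X₀, f, hX₀, hf⟩ := henv A
    obtain ⟨Q, c, hc0, hcfac⟩ := hpc f
    obtain ⟨X₁, e, hX₁, he⟩ := henv Q
    obtain ⟨K, k, hK, hk0, hkfac⟩ := hker hX₀ hX₁ (c ≫ e)
    have hf0 : f ≫ (c ≫ e) = 0 := by rw [← Category.assoc, hc0, zero_comp]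
    obtain ⟨f', hf'⟩ := hkfac f hf0
    -- key: maps out of X₀ to B killed by f are killed by k
    have key : ∀ ⦃Z : C⦄ (v : X₀ ⟶ Z), B Z → f ≫ v = 0 → k ≫ v = 0 := by
      intro Z v hZ hv
      obtain ⟨w, hw⟩ := hcfac v hv
      obtain ⟨w', hw'⟩ := he hZ w
      rw [← hw, ← hw', ← Category.assoc, ← Category.assoc, Category.assoc k c e, hk0, zero_comp]
    obtain ⟨p, hp⟩ := hf hK f'
    -- e₀ := k ≫ p is idempotent
    have hkpk : k ≫ p ≫ k = k := by
      have h1 : f ≫ (𝟙 X₀ - p ≫ k) = 0 := by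
        rw [Preadditive.comp_sub, Category.comp_id, ← Category.assoc, hp, hf', sub_self]
      have h2 := key (𝟙 X₀ - p ≫ k) hX₀ h1
      rw [Preadditive.comp_sub, Category.comp_id, sub_eq_zero] at h2
      exact h2.symm
    have hidem : (k ≫ p) ≫ (k ≫ p) = k ≫ p := by
      calc (k ≫ p) ≫ (k ≫ p) = (k ≫ p ≫ k) ≫ p := by simp only [Category.assoc]
        _ = k ≫ p := by rw [hkpk]
    obtain ⟨K', i, q, hiq, hqi⟩ := hic.idempotents_split K (k ≫ p) hidem
    have hK' : B K' := hsum hK ⟨i, q, hiq⟩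
    have hf'e : f' ≫ k ≫ p = f' := by rw [← Category.assoc, hf', hp]
    have hik : i ≫ k ≫ p = i := by rw [← hqi, ← Category.assoc, hiq, Category.id_comp]
    refine ⟨K', hK', f' ≫ q, ?_⟩
    -- zero detection
    have hzero : ∀ ⦃Y : C⦄ (h : K' ⟶ Y), B Y → (f' ≫ q) ≫ h = 0 → h = 0 := by
      intro Y h hY h0
      set h₀ : K ⟶ Y := q ≫ h with hh₀
      have hfh₀ : f' ≫ h₀ = 0 := by rw [hh₀, ← Category.assoc]; exact h0
      obtain ⟨K₁, k₁, hK₁, hk₁0, hk₁fac⟩ := hker hK hY h₀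
      obtain ⟨t, ht⟩ := hk₁fac f' hfh₀
      obtain ⟨s, hs⟩ := hf hK₁ t
      set u : K ⟶ K := (k ≫ s) ≫ k₁ with hu
      have hfu : f' ≫ u = f' := by
        calc f' ≫ u = ((f' ≫ k) ≫ s) ≫ k₁ := by rw [hu]; simp only [Category.assoc]
          _ = (f ≫ s) ≫ k₁ := by rw [hf']
          _ = f' := by rw [hs, ht]
      have huh : u ≫ h₀ = 0 := by rw [hu, Category.assoc, hk₁0, comp_zero]
      have hfv : f ≫ (p ≫ (𝟙 K - u)) = 0 := by
        rw [← Category.assoc, hp, Preadditive.comp_sub, Category.comp_id, hfu, sub_self]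
      have hkv : k ≫ p ≫ (𝟙 K - u) = 0 := key (p ≫ (𝟙 K - u)) hK hfv
      have hie : i ≫ (𝟙 K - u) = 0 := by
        calc i ≫ (𝟙 K - u) = (i ≫ k ≫ p) ≫ (𝟙 K - u) := by rw [hik]
          _ = i ≫ (k ≫ p ≫ (𝟙 K - u)) := by simp only [Category.assoc]
          _ = 0 := by rw [hkv, comp_zero]
      have hh : h₀ = (𝟙 K - u) ≫ h₀ := by
        rw [Preadditive.sub_comp, Category.id_comp, huh, sub_zero]
      calc h = i ≫ h₀ := by rw [hh₀, ← Category.assoc, hiq, Category.id_comp]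
        _ = i ≫ (𝟙 K - u) ≫ h₀ := by conv_lhs => rw [hh]
        _ = (i ≫ (𝟙 K - u)) ≫ h₀ := (Category.assoc _ _ _).symm
        _ = 0 := by rw [hie, zero_comp]
    intro Y hY g
    obtain ⟨v, hv⟩ := hf hY g
    have hfact : ∀ (v' : X₀ ⟶ Y), (f' ≫ q) ≫ i ≫ k ≫ v' = f ≫ v' := by
      intro v'
      calc (f' ≫ q) ≫ i ≫ k ≫ v' = (f' ≫ (q ≫ i)) ≫ k ≫ v' := by simp only [Category.assoc]
        _ = (f' ≫ k ≫ p) ≫ k ≫ v' := by rw [hqi]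
        _ = f' ≫ k ≫ v' := by rw [hf'e]
        _ = (f' ≫ k) ≫ v' := by rw [Category.assoc]
        _ = f ≫ v' := by rw [hf']
    refine ⟨i ≫ k ≫ v, by simpa using (hfact v).trans hv, ?_⟩
    intro t ht
    have h0 : (f' ≫ q) ≫ (t - i ≫ k ≫ v) = 0 := by
      rw [Preadditive.comp_sub, ht, hfact v, hv, sub_self]
    have hzt := hzero _ hY h0
    rwa [sub_eq_zero] at hzt

end PaperStmt
end

section
/- Let C be an additive category and let f : (A, e) → (B, e') be a morphism in the idempotent completion (Karoubi envelope) of C. (1) If c : K → A is a pseudokernel of the underlying morphism f : A → B in C, then e ∘ c : (K, 1_K) → (A, e) is a pseudokernel of f in the Karoubi envelope; consequently, C has pseudokernels if and only if the Karoubi envelope of C has pseudokernels. (2) If c : B → K' is a pseudocokernel of f in C, then c ∘ e' : (B, e') → (K', 1_{K'}) is a pseudocokernel of f in the Karoubi envelope; consequently, C has pseudocokernels if and only if the Karoubi envelope of C has pseudocokernels. -/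
open CategoryTheory Limits

universe w v u

namespace PaperStmt

open CategoryTheory.Idempotents

/-- Lemma 3.4: pseudokernels and pseudocokernels in the idempotent completion
(Karoubi envelope). -/
theorem karoubi_pseudokernels_pseudocokernels
    {C : Type u} [Category.{v} C] [Preadditive C] :
    (∀ (P Q : Karoubi C) (f : P ⟶ Q) (K : C) (c : K ⟶ P.X),
        IsPseudokernel f.f c →
        ∀ g : (toKaroubi C).obj K ⟶ P, g.f = c ≫ P.p → IsPseudokernel f g) ∧
    (HasPseudokernels C ↔ HasPseudokernels (Karoubi C)) ∧
    (∀ (P Q : Karoubi C) (f : P ⟶ Q) (K' : C) (c : Q.X ⟶ K'),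
        IsPseudocokernel f.f c →
        ∀ g : Q ⟶ (toKaroubi C).obj K', g.f = Q.p ≫ c → IsPseudocokernel f g) ∧
    (HasPseudocokernels C ↔ HasPseudocokernels (Karoubi C)) := by
  have hk : ∀ (P Q : Karoubi C) (f : P ⟶ Q) (K : C) (c : K ⟶ P.X),
      IsPseudokernel f.f c →
      ∀ g : (toKaroubi C).obj K ⟶ P, g.f = c ≫ P.p → IsPseudokernel f g := by
    rintro P Q f K c ⟨hc0, hc⟩ g hg
    constructor
    · rw [Karoubi.hom_eq_zero_iff, Karoubi.comp_f, hg, Category.assoc,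
        Karoubi.p_comp, hc0]
    · intro K' k' hk'
      rw [Karoubi.hom_eq_zero_iff, Karoubi.comp_f] at hk'
      obtain ⟨t, ht⟩ := hc k'.f hk'
      refine ⟨⟨K'.p ≫ t, by simp [← Category.assoc, K'.idem]⟩, ?_⟩
      apply Karoubi.hom_ext
      dsimp [Karoubi.comp_f]
      rw [hg, Category.assoc, ← Category.assoc t, ht, ← Category.assoc, Category.assoc, ← k'.comm]
      simp [Karoubi.p_comp, Karoubi.comp_p]
  have hck : ∀ (P Q : Karoubi C) (f : P ⟶ Q) (K' : C) (c : Q.X ⟶ K'),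
      IsPseudocokernel f.f c →
      ∀ g : Q ⟶ (toKaroubi C).obj K', g.f = Q.p ≫ c → IsPseudocokernel f g := by
    rintro P Q f K' c ⟨hc0, hc⟩ g hg
    constructor
    · rw [Karoubi.hom_eq_zero_iff, Karoubi.comp_f, hg, ← Category.assoc,
        Karoubi.comp_p, hc0]
    · intro Q' c' hc'
      rw [Karoubi.hom_eq_zero_iff, Karoubi.comp_f] at hc'
      obtain ⟨t, ht⟩ := hc c'.f hc'
      refine ⟨⟨t ≫ Q'.p, by rw [← Category.assoc, Category.assoc]; simp [Q'.idem]⟩, ?_⟩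
      apply Karoubi.hom_ext
      dsimp [Karoubi.comp_f]
      rw [hg, Category.assoc, ← Category.assoc c, ht, ← c'.comm]
      simp [Karoubi.p_comp, Karoubi.comp_p]
  refine ⟨hk, ⟨?_, ?_⟩, hck, ⟨?_, ?_⟩⟩
  · intro h P Q f
    obtain ⟨K, c, hc⟩ := h f.f
    refine ⟨(toKaroubi C).obj K, ⟨c ≫ P.p, by simp [P.idem]⟩, ?_⟩
    exact hk P Q f K c hc _ rfl
  · intro h X Y f
    obtain ⟨K, k, hk0, hku⟩ := h ((toKaroubi C).map f)
    refine ⟨K.X, k.f, ?_, ?_⟩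
    · simpa using Karoubi.hom_eq_zero_iff.mp hk0
    · intro K' k' hk'
      obtain ⟨t, ht⟩ := hku (K' := (toKaroubi C).obj K')
        ⟨k', by simp⟩ (by rw [Karoubi.hom_eq_zero_iff]; simpa using hk')
      exact ⟨t.f, congrArg Karoubi.Hom.f ht⟩
  · intro h P Q f
    obtain ⟨K', c, hc⟩ := h f.f
    refine ⟨(toKaroubi C).obj K', ⟨Q.p ≫ c, by simp⟩, ?_⟩
    exact hck P Q f K' c hc _ rfl
  · intro h X Y f
    obtain ⟨K, k, hk0, hku⟩ := h ((toKaroubi C).map f)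
    refine ⟨K.X, k.f, ?_, ?_⟩
    · simpa using Karoubi.hom_eq_zero_iff.mp hk0
    · intro Q' c' hc'
      obtain ⟨t, ht⟩ := hku (Q' := (toKaroubi C).obj Q')
        ⟨c', by simp⟩ (by rw [Karoubi.hom_eq_zero_iff]; simpa using hc')
      exact ⟨t.f, congrArg Karoubi.Hom.f ht⟩

end PaperStmt
end

section
/- Let C be an additive category with pseudokernels and pseudocokernels, and let B be a full subcategory of C. The following are equivalent: (1) the full subcategory B̂ of the Karoubi envelope of C, consisting of the objects (X, e) with X in B, is coreflective in the Karoubi envelope of C; (2) B is precovering in C and every morphism between objects of B has a pseudocokernel in C that belongs to B. -/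
open CategoryTheory Limits

universe w v u

namespace PaperStmt

open CategoryTheory.Idempotents

section AuxGeneral

universe v₂ u₂

variable {D : Type u₂} [Category.{v₂} D]

/-- If every object admits a coreflection onto `B`, then `B` is coreflective. -/
lemma isCoreflectiveSub_of_coreflections (B : D → Prop)
    (h : ∀ A : D, ∃ (X : D) (f : X ⟶ A), IsCoreflection B f) :
    IsCoreflectiveSub B := by
  have : ∀ A : D, HasTerminal (CostructuredArrow (ObjectProperty.ι B) A) := by
    intro A
    obtain ⟨X, f, hX, hf⟩ := h A
    let Xs : ObjectProperty.FullSubcategory B := ⟨X, hX⟩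
    let f' : (ObjectProperty.ι B).obj Xs ⟶ A := f
    refine IsTerminal.hasTerminal (X := CostructuredArrow.mk f') (IsTerminal.ofUniqueHom ?_ ?_)
    · intro Z
      refine CostructuredArrow.homMk ?_ ?_
      · exact ObjectProperty.homMk (hf Z.left.2 Z.hom).exists.choose
      · exact (hf Z.left.2 Z.hom).exists.choose_spec
    · intro Z m
      apply CostructuredArrow.hom_ext
      apply ObjectProperty.hom_ext
      exact (hf Z.left.2 Z.hom).unique (CostructuredArrow.w m)
        (hf Z.left.2 Z.hom).exists.choose_spec
  exact isLeftAdjoint_of_costructuredArrowTerminals _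

/-- Conversely, a coreflective subcategory admits coreflections. -/
lemma coreflections_of_isCoreflectiveSub (B : D → Prop)
    (h : IsCoreflectiveSub B) (A : D) :
    ∃ (X : D) (f : X ⟶ A), IsCoreflection B f := by
  obtain ⟨G, ⟨adj⟩⟩ := h.exists_rightAdjoint
  refine ⟨(G.obj A).obj, adj.counit.app A, (G.obj A).property, ?_⟩
  intro Y hY g
  let Ys : ObjectProperty.FullSubcategory B := ⟨Y, hY⟩
  let g' : (ObjectProperty.ι B).obj Ys ⟶ A := g
  have key : ∀ t : Y ⟶ (G.obj A).obj,
      t ≫ adj.counit.app A = ((adj.homEquiv Ys A).symm (ObjectProperty.homMk t)) := by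
    intro t
    rw [Adjunction.homEquiv_counit]
    rfl
  refine ⟨(adj.homEquiv Ys A g').hom, ?_, ?_⟩
  · exact (key _).trans ((adj.homEquiv Ys A).symm_apply_apply g')
  · intro t ht
    have ht' : t ≫ adj.counit.app A = g := ht
    have h1 : (adj.homEquiv Ys A).symm (ObjectProperty.homMk t) = g := (key t).symm.trans ht'
    have h2 := congrArg (adj.homEquiv Ys A) h1
    simpa using congrArg InducedCategory.Hom.hom h2

/-- The key construction: coreflections exist in a preadditive category with pseudokernels,
given a precovering subcategory with pseudocokernels in it and splittings of idempotents. -/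
lemma coreflection_exists [Preadditive D] (B' : D → Prop)
    (hprec : Precovering B')
    (hpkD : HasPseudokernels D)
    (hpcB : ∀ ⦃X Y : D⦄, B' X → B' Y → ∀ f : X ⟶ Y,
      ∃ (Q : D) (c : Y ⟶ Q), B' Q ∧ IsPseudocokernel f c)
    (hsplit : ∀ ⦃Q : D⦄, B' Q → ∀ ε : Q ⟶ Q, ε ≫ ε = ε →
      ∃ (Q' : D) (s : Q' ⟶ Q) (r : Q ⟶ Q'), B' Q' ∧ s ≫ r = 𝟙 Q' ∧ r ≫ s = ε)
    (A : D) : ∃ (X : D) (f : X ⟶ A), IsCoreflection B' f := by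
  obtain ⟨X₀, g₀, hX₀, hg₀⟩ := hprec A
  obtain ⟨K, k, hk0, hk⟩ := hpkD g₀
  obtain ⟨X₁, p, hX₁, hp⟩ := hprec K
  have hd0 : (p ≫ k) ≫ g₀ = 0 := by rw [Category.assoc, hk0, comp_zero]
  have K1 : ∀ ⦃Y : D⦄, B' Y → ∀ t : Y ⟶ X₀, t ≫ g₀ = 0 → ∃ w : Y ⟶ X₁, w ≫ (p ≫ k) = t := by
    intro Y hY t ht
    obtain ⟨v, hv⟩ := hk t ht
    obtain ⟨w, hw⟩ := hp hY v
    exact ⟨w, by rw [← Category.assoc, hw, hv]⟩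
  obtain ⟨Q, c, hQ, hc0, hcuniv⟩ := hpcB hX₁ hX₀ (p ≫ k)
  obtain ⟨gbar, hgbar⟩ := hcuniv g₀ hd0
  obtain ⟨u, hu⟩ := hg₀ hQ gbar
  have K4 : c ≫ u ≫ c = c := by
    have h1 : (c ≫ u - 𝟙 X₀) ≫ g₀ = 0 := by
      rw [Preadditive.sub_comp, Category.id_comp, Category.assoc, hu, hgbar, sub_self]
    obtain ⟨w, hw⟩ := K1 hX₀ _ h1
    have h2 : (c ≫ u - 𝟙 X₀) ≫ c = 0 := by
      rw [← hw, Category.assoc, hc0, comp_zero]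
    rw [Preadditive.sub_comp, Category.id_comp, sub_eq_zero] at h2
    rw [← Category.assoc]
    exact h2
  have hidem : (u ≫ c) ≫ (u ≫ c) = u ≫ c := by rw [Category.assoc, K4]
  obtain ⟨X, s, r, hX, hsr, hrs⟩ := hsplit hQ (u ≫ c) hidem
  refine ⟨X, s ≫ gbar, hX, ?_⟩
  intro Y hY g
  obtain ⟨a, ha⟩ := hg₀ hY g
  have hex : (a ≫ c ≫ r) ≫ s ≫ gbar = g := by
    have e0 : (a ≫ c ≫ r) ≫ s ≫ gbar = a ≫ c ≫ (r ≫ s) ≫ gbar := by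
      simp only [Category.assoc]
    rw [e0, hrs]
    simp only [Category.assoc]
    rw [hgbar, hu, hgbar, ha]
  refine ⟨a ≫ c ≫ r, hex, ?_⟩
  intro t ht
  have hz : (t - a ≫ c ≫ r) ≫ s ≫ gbar = 0 := by
    rw [Preadditive.sub_comp, ht, hex, sub_self]
  have h3 : ((t - a ≫ c ≫ r) ≫ s ≫ u) ≫ g₀ = 0 := by
    have e1 : ((t - a ≫ c ≫ r) ≫ s ≫ u) ≫ g₀ = (t - a ≫ c ≫ r) ≫ s ≫ gbar := by
      simp only [Category.assoc, hu]
    rw [e1, hz]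
  obtain ⟨w, hw⟩ := K1 hY _ h3
  have h6 : (t - a ≫ c ≫ r) ≫ s ≫ u ≫ c = 0 := by
    have e2 : (t - a ≫ c ≫ r) ≫ s ≫ u ≫ c = (w ≫ (p ≫ k)) ≫ c := by
      rw [hw]; simp only [Category.assoc]
    rw [e2, Category.assoc, hc0, comp_zero]
  have h7 : (t - a ≫ c ≫ r) ≫ s = 0 := by
    have e3 : (t - a ≫ c ≫ r) ≫ s = (t - a ≫ c ≫ r) ≫ s ≫ r ≫ s := by
      rw [← Category.assoc s r s, hsr, Category.id_comp]
    rw [e3, hrs]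
    exact h6
  have h8 : ((t - a ≫ c ≫ r) ≫ s) ≫ r = t - a ≫ c ≫ r := by
    rw [Category.assoc, hsr, Category.comp_id]
  rw [h7, zero_comp] at h8
  exact sub_eq_zero.mp h8.symm

end AuxGeneral

section AuxKaroubi

variable {C : Type u} [Category.{v} C] [Preadditive C]

/-- Pseudokernels lift to the Karoubi envelope. -/
lemma karoubi_hasPseudokernels (hpk : HasPseudokernels C) :
    HasPseudokernels (Karoubi C) := by
  intro P Q α
  obtain ⟨K, k, hk0, hk⟩ := hpk α.f
  refine ⟨⟨K, 𝟙 K, by simp⟩, ⟨k ≫ P.p, by simp⟩, ?_, ?_⟩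
  · rw [Karoubi.hom_eq_zero_iff]
    show (k ≫ P.p) ≫ α.f = 0
    rw [Category.assoc, Karoubi.p_comp, hk0]
  · intro K' k' hk'
    have h2 : k'.f ≫ α.f = 0 := Karoubi.hom_eq_zero_iff.mp hk'
    obtain ⟨t, ht⟩ := hk k'.f h2
    refine ⟨⟨K'.p ≫ t, by simp⟩, ?_⟩
    apply Karoubi.hom_ext
    show (K'.p ≫ t) ≫ k ≫ P.p = k'.f
    have e1 : (K'.p ≫ t) ≫ k ≫ P.p = K'.p ≫ (t ≫ k) ≫ P.p := by
      simp only [Category.assoc]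
    rw [e1, ht, Karoubi.comp_p, Karoubi.p_comp]

/-- Precovering subcategories lift to the Karoubi envelope. -/
lemma karoubi_precovering {B : C → Prop} (h : Precovering B) :
    Precovering (fun P : Karoubi C => B P.X) := by
  intro A
  obtain ⟨X, f, hX, hf⟩ := h A.X
  refine ⟨⟨X, 𝟙 X, by simp⟩, ⟨f ≫ A.p, by simp⟩, hX, ?_⟩
  intro Y hY g
  obtain ⟨h', hh'⟩ := hf hY g.f
  refine ⟨⟨Y.p ≫ h', by simp⟩, ?_⟩
  apply Karoubi.hom_ext
  show (Y.p ≫ h') ≫ f ≫ A.p = g.f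
  simp only [Category.assoc]
  rw [← Category.assoc h' f, hh']
  exact g.comm

/-- Pseudocokernels between objects of `B̂` exist in the Karoubi envelope with vertex in `B̂`. -/
lemma karoubi_pseudocokernels {B : C → Prop}
    (hB : ∀ ⦃X Y : C⦄, B X → B Y → ∀ f : X ⟶ Y,
      ∃ (Q : C) (c : Y ⟶ Q), B Q ∧ IsPseudocokernel f c)
    {P Q : Karoubi C} (hP : B P.X) (hQ : B Q.X) (α : P ⟶ Q) :
    ∃ (R : Karoubi C) (c : Q ⟶ R), B R.X ∧ IsPseudocokernel α c := by
  obtain ⟨Q₀, c₀, hQ₀, hc00, hc0u⟩ := hB hP hQ α.f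
  refine ⟨⟨Q₀, 𝟙 Q₀, by simp⟩, ⟨Q.p ≫ c₀, by simp⟩, hQ₀, ?_, ?_⟩
  · rw [Karoubi.hom_eq_zero_iff]
    show α.f ≫ Q.p ≫ c₀ = 0
    rw [Karoubi.comp_p_assoc, hc00]
  · intro R' c' hc'
    have h2 : α.f ≫ c'.f = 0 := Karoubi.hom_eq_zero_iff.mp hc'
    obtain ⟨t, ht⟩ := hc0u c'.f h2
    refine ⟨⟨t ≫ R'.p, by simp⟩, ?_⟩
    apply Karoubi.hom_ext
    show (Q.p ≫ c₀) ≫ t ≫ R'.p = c'.f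
    simp only [Category.assoc]
    rw [← Category.assoc c₀ t, ht, ← Category.assoc, Karoubi.p_comp, Karoubi.comp_p]

/-- Idempotents on objects of `B̂` split within `B̂` in the Karoubi envelope. -/
lemma karoubi_split {B : C → Prop} {Q : Karoubi C} (hQ : B Q.X)
    (ε : Q ⟶ Q) (hidem : ε ≫ ε = ε) :
    ∃ (Q' : Karoubi C) (s : Q' ⟶ Q) (r : Q ⟶ Q'),
      B Q'.X ∧ s ≫ r = 𝟙 Q' ∧ r ≫ s = ε := by
  have hff : ε.f ≫ ε.f = ε.f := congrArg Karoubi.Hom.f hidem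
  refine ⟨⟨Q.X, ε.f, hff⟩, ⟨ε.f, ?_⟩, ⟨ε.f, ?_⟩, hQ, ?_, ?_⟩
  · show ε.f ≫ ε.f ≫ Q.p = ε.f
    rw [Karoubi.comp_p, hff]
  · show Q.p ≫ ε.f ≫ ε.f = ε.f
    rw [hff, Karoubi.p_comp]
  · apply Karoubi.hom_ext
    exact hff
  · apply Karoubi.hom_ext
    exact hff

end AuxKaroubi

/-- Corollary 3.6: the idempotent completion `B̂` of `B` is coreflective in the
Karoubi envelope of `C` iff `B` is precovering and morphisms of `B` have pseudocokernels in `B`. -/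
theorem karoubi_coreflective_iff
    {C : Type u} [Category.{v} C] [Preadditive C]
    (hpk : HasPseudokernels C) (hpc : HasPseudocokernels C) (B : C → Prop) :
    IsCoreflectiveSub (fun P : Karoubi C => B P.X) ↔
      (Precovering B ∧
        ∀ ⦃X Y : C⦄, B X → B Y → ∀ f : X ⟶ Y,
          ∃ (Q : C) (c : Y ⟶ Q), B Q ∧ IsPseudocokernel f c) := by
  constructor
  · intro h
    have hcor := coreflections_of_isCoreflectiveSub _ h
    constructor
    · -- `B` is precovering
      intro A
      obtain ⟨P, f, hP, hf⟩ := hcor ⟨A, 𝟙 A, by simp⟩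
      refine ⟨P.X, f.f, hP, ?_⟩
      intro Y hY g
      obtain ⟨t, ht, -⟩ := hf (Y := ⟨Y, 𝟙 Y, by simp⟩) hY ⟨g, by simp⟩
      refine ⟨t.f, ?_⟩
      have := congrArg Karoubi.Hom.f ht
      exact this
    · -- pseudocokernels in `B`
      intro X Y hX hY f
      obtain ⟨Q₀, c₀, hc00, hc0u⟩ := hpc f
      obtain ⟨P, r, hP, hr⟩ := hcor ⟨Q₀, 𝟙 Q₀, by simp⟩
      obtain ⟨s, hs, -⟩ := hr (Y := ⟨Y, 𝟙 Y, by simp⟩) hY ⟨c₀, by simp⟩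
      refine ⟨P.X, s.f, hP, ?_, ?_⟩
      · -- `f ≫ s.f = 0`
        have h1 : ((⟨f, by simp⟩ : (⟨X, 𝟙 X, by simp⟩ : Karoubi C) ⟶ ⟨Y, 𝟙 Y, by simp⟩) ≫ s)
            ≫ r = 0 := by
          rw [Category.assoc, hs]
          exact Karoubi.hom_eq_zero_iff.mpr hc00
        obtain ⟨t0, ht0, hu0⟩ := hr (Y := ⟨X, 𝟙 X, by simp⟩) hX 0
        have e1 := hu0 _ h1
        have e2 := hu0 0 (by simp)
        have e3 : ((⟨f, by simp⟩ : (⟨X, 𝟙 X, by simp⟩ : Karoubi C) ⟶ ⟨Y, 𝟙 Y, by simp⟩) ≫ s)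
            = 0 := e1.trans e2.symm
        have := congrArg Karoubi.Hom.f e3
        exact this
      · intro Q' c' hc'
        obtain ⟨t, ht⟩ := hc0u c' hc'
        refine ⟨r.f ≫ t, ?_⟩
        have h2 : s.f ≫ r.f = c₀ := congrArg Karoubi.Hom.f hs
        rw [← Category.assoc, h2, ht]
  · rintro ⟨hprec, hB⟩
    apply isCoreflectiveSub_of_coreflections
    intro A
    exact coreflection_exists _ (karoubi_precovering hprec) (karoubi_hasPseudokernels hpk)
      (fun P Q hP hQ α => karoubi_pseudocokernels hB hP hQ α)
      (fun Q hQ ε hidem => karoubi_split hQ ε hidem) A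

end PaperStmt
end

section
/- Let A be an AB3 abelian category and let B be a full additive coreflective subcategory of A. Then B (which is preabelian) is an abelian category if and only if for every morphism f : B → B' between objects of B, the canonical morphism B/tr_B(Ker f) → Im f induced by f is a B-coreflection, where tr_B(Ker f) denotes the trace of B in Ker f, i.e. the image of any B-precover of Ker f. -/
open CategoryTheory Limits

universe w v u

namespace PaperStmt

section AuxHelpers

variable {C : Type u} [Category.{v} C] {B : C → Prop}

theorem IsCoreflection.isPrecover {X M : C} {g : X ⟶ M} (h : IsCoreflection B g) :
    IsPrecover B g :=
  ⟨h.1, fun _ hY g' => ((h.2 hY g').exists)⟩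

theorem exists_coreflection (hcor : IsCoreflectiveSub B) (M : C) :
    ∃ (W : C) (g : W ⟶ M), IsCoreflection B g := by
  letI : (ObjectProperty.ι B).IsLeftAdjoint := hcor
  let R := (ObjectProperty.ι B).rightAdjoint
  let adj : ObjectProperty.ι B ⊣ R :=
    Adjunction.ofIsLeftAdjoint (ObjectProperty.ι B)
  refine ⟨(R.obj M).obj, adj.counit.app M, (R.obj M).property, ?_⟩
  intro Y hY g
  let Y' : ObjectProperty.FullSubcategory B := ⟨Y, hY⟩
  have key : ∀ h : Y' ⟶ R.obj M, (adj.homEquiv Y' M).symm h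
      = (ObjectProperty.ι B).map h ≫ adj.counit.app M :=
    fun h => adj.homEquiv_counit Y' M h
  refine ⟨((adj.homEquiv Y' M) g).hom, ?_, fun h hh => ?_⟩
  · exact (key _).symm.trans (Equiv.symm_apply_apply _ _)
  · have h3 : (adj.homEquiv Y' M).symm (ObjectProperty.homMk h) = g :=
      (key (ObjectProperty.homMk h)).trans hh
    rw [← h3, Equiv.apply_symm_apply]
    rfl

theorem IsCoreflection.comp_iso {W M M' : C} {g : W ⟶ M} (hg : IsCoreflection B g)
    (e : M ≅ M') : IsCoreflection B (g ≫ e.hom) := by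
  refine ⟨hg.1, fun Y hY g' => ?_⟩
  obtain ⟨h, hh, hu⟩ := hg.2 hY (g' ≫ e.inv)
  refine ⟨h, show h ≫ g ≫ e.hom = g' by rw [← Category.assoc, hh]; simp,
    fun h' hh' => ?_⟩
  have hh'' : h' ≫ g ≫ e.hom = g' := hh'
  exact hu h' (show h' ≫ g = g' ≫ e.inv by rw [Iso.eq_comp_inv, Category.assoc]; exact hh'')

theorem IsCoreflection.iso_comp (hiso : ClosedUnderIso B) {W' W M : C} (e : W' ≅ W)
    {g : W ⟶ M} (hg : IsCoreflection B g) : IsCoreflection B (e.hom ≫ g) := by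
  refine ⟨hiso e.symm hg.1, fun Y hY g' => ?_⟩
  obtain ⟨h, hh, hu⟩ := hg.2 hY g'
  refine ⟨h ≫ e.inv, show (h ≫ e.inv) ≫ e.hom ≫ g = g' by
      rw [Category.assoc, Iso.inv_hom_id_assoc]; exact hh, fun h' hh' => ?_⟩
  have hh'' : h' ≫ e.hom ≫ g = g' := hh'
  have := hu (h' ≫ e.hom) (show (h' ≫ e.hom) ≫ g = g' by rw [Category.assoc]; exact hh'')
  rw [← this]; simp

/-- Two coreflections of the same object differ by a unique iso. -/
theorem IsCoreflection.iso_of_coreflections {W W' M : C} {g : W ⟶ M} {g' : W' ⟶ M}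
    (hg : IsCoreflection B g) (hg' : IsCoreflection B g') :
    ∃ e : W ≅ W', e.hom ≫ g' = g := by
  obtain ⟨a, ha, -⟩ := hg'.2 hg.1 g
  obtain ⟨b, hb, -⟩ := hg.2 hg'.1 g'
  have hab : a ≫ b = 𝟙 W := by
    obtain ⟨c, -, hc⟩ := hg.2 hg.1 g
    rw [hc (a ≫ b) (show (a ≫ b) ≫ g = g by rw [Category.assoc, hb]; exact ha),
      hc (𝟙 W) (show 𝟙 W ≫ g = g by simp)]
  have hba : b ≫ a = 𝟙 W' := by
    obtain ⟨c, -, hc⟩ := hg'.2 hg'.1 g'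
    rw [hc (b ≫ a) (show (b ≫ a) ≫ g' = g' by rw [Category.assoc, ha]; exact hb),
      hc (𝟙 W') (show 𝟙 W' ≫ g' = g' by simp)]
  exact ⟨⟨a, b, hab, hba⟩, ha⟩


end AuxHelpers

section AuxSubcat

variable {A : Type u} [Category.{v} A] [Abelian A] {B : A → Prop}

theorem cokernel_mem (hiso : ClosedUnderIso B)
    (hc : ∀ M : A, ∃ (W : A) (g : W ⟶ M), IsCoreflection B g)
    {X Y : A} (hX : B X) (hY : B Y) (f : X ⟶ Y) : B (cokernel f) := by
  obtain ⟨W, ε, hW, hu⟩ := hc (cokernel f)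
  obtain ⟨π', hπ', -⟩ := hu hY (cokernel.π f)
  have hfπ' : f ≫ π' = 0 := by
    obtain ⟨z, -, hz⟩ := hu hX (0 : X ⟶ cokernel f)
    rw [hz (f ≫ π') (show (f ≫ π') ≫ ε = 0 by
        rw [Category.assoc, hπ', cokernel.condition]),
      hz 0 (show (0 : X ⟶ W) ≫ ε = 0 by simp)]
  have ht : cokernel.π f ≫ cokernel.desc f π' hfπ' = π' := cokernel.π_desc _ _ _
  have h1 : cokernel.desc f π' hfπ' ≫ ε = 𝟙 (cokernel f) := by
    rw [← cancel_epi (cokernel.π f), ← Category.assoc, ht, hπ', Category.comp_id]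
  have h2 : ε ≫ cokernel.desc f π' hfπ' = 𝟙 W := by
    obtain ⟨z, -, hz⟩ := hu hW ε
    rw [hz (ε ≫ cokernel.desc f π' hfπ') (show (ε ≫ cokernel.desc f π' hfπ') ≫ ε = ε by
        rw [Category.assoc, h1, Category.comp_id]),
      hz (𝟙 W) (show 𝟙 W ≫ ε = ε by simp)]
  exact hiso ⟨ε, cokernel.desc f π' hfπ', h2, h1⟩ hW

theorem hasKernel_sub
    (hc : ∀ M : A, ∃ (W : A) (g : W ⟶ M), IsCoreflection B g)
    {X Y : A} (hX : B X) (hY : B Y) (f : X ⟶ Y) :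
    HasLimit (parallelPair (ObjectProperty.homMk f : (⟨X, hX⟩ : ObjectProperty.FullSubcategory B) ⟶ ⟨Y, hY⟩) 0) := by
  obtain ⟨W, ε, hW, hu⟩ := hc (kernel f)
  let X' : ObjectProperty.FullSubcategory B := ⟨X, hX⟩
  let Y' : ObjectProperty.FullSubcategory B := ⟨Y, hY⟩
  let W' : ObjectProperty.FullSubcategory B := ⟨W, hW⟩
  let fB : X' ⟶ Y' := ObjectProperty.homMk f
  let kA : W ⟶ X := ε ≫ kernel.ι f
  let kB : W' ⟶ X' := ObjectProperty.homMk kA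
  have cond : kB ≫ fB = 0 := ObjectProperty.hom_ext B (show (ε ≫ kernel.ι f) ≫ f = 0 by
    rw [Category.assoc, kernel.condition, comp_zero])
  refine HasLimit.mk ⟨KernelFork.ofι kB cond, KernelFork.IsLimit.ofι kB cond
    (fun {W''} g' hg' => ObjectProperty.homMk
      (hu W''.property (kernel.lift f g'.hom (congrArg (fun x => x.hom) hg'))).choose)
    (fun {W''} g' hg' => ?_) (fun {W''} g' hg' m hm => ?_)⟩
  · have hc1 := (hu W''.property (kernel.lift f g'.hom (congrArg (fun x => x.hom) hg'))).choose_spec.1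
    apply ObjectProperty.hom_ext
    show (hu W''.property (kernel.lift f g'.hom (congrArg (fun x => x.hom) hg'))).choose ≫
      (ε ≫ kernel.ι f) = g'.hom
    rw [← Category.assoc, hc1, kernel.lift_ι]
  · have hmA : m.hom ≫ (ε ≫ kernel.ι f) = g'.hom := congrArg (fun x => x.hom) hm
    rw [← Category.assoc] at hmA
    have h5 : m.hom ≫ ε = kernel.lift f g'.hom (congrArg (fun x => x.hom) hg') := by
      rw [← cancel_mono (kernel.ι f), kernel.lift_ι]
      exact hmA
    exact ObjectProperty.hom_ext B ((hu W''.property _).unique h5 (hu W''.property _).choose_spec.1)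

theorem hasCokernel_sub (hiso : ClosedUnderIso B)
    (hc : ∀ M : A, ∃ (W : A) (g : W ⟶ M), IsCoreflection B g)
    {X Y : A} (hX : B X) (hY : B Y) (f : X ⟶ Y) :
    HasColimit (parallelPair (ObjectProperty.homMk f : (⟨X, hX⟩ : ObjectProperty.FullSubcategory B) ⟶ ⟨Y, hY⟩) 0) := by
  let X' : ObjectProperty.FullSubcategory B := ⟨X, hX⟩
  let Y' : ObjectProperty.FullSubcategory B := ⟨Y, hY⟩
  let Q' : ObjectProperty.FullSubcategory B := ⟨cokernel f, cokernel_mem hiso hc hX hY f⟩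
  let fB : X' ⟶ Y' := ObjectProperty.homMk f
  let πB : Y' ⟶ Q' := ObjectProperty.homMk (cokernel.π f)
  have cond : fB ≫ πB = 0 := ObjectProperty.hom_ext B (cokernel.condition f)
  refine HasColimit.mk ⟨CokernelCofork.ofπ πB cond, CokernelCofork.IsColimit.ofπ πB cond
    (fun {Z'} g' hg' => ObjectProperty.homMk (cokernel.desc f g'.hom (congrArg (fun x => x.hom) hg')))
    (fun {Z'} g' hg' => ObjectProperty.hom_ext B
      (cokernel.π_desc f g'.hom (congrArg (fun x => x.hom) hg')))
    (fun {Z'} g' hg' m hm => ?_)⟩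
  · have hmA : cokernel.π f ≫ m.hom = g'.hom := congrArg (fun x => x.hom) hm
    apply ObjectProperty.hom_ext
    show m.hom = cokernel.desc f g'.hom _
    rw [← cancel_epi (cokernel.π f), hmA, cokernel.π_desc]

theorem hasZeroObject_sub (hzero : ∃ Z : A, IsZero Z ∧ B Z) :
    HasZeroObject (ObjectProperty.FullSubcategory B) := by
  obtain ⟨Z, hZ, hBZ⟩ := hzero
  refine ⟨⟨Z, hBZ⟩, ?_⟩
  rw [IsZero.iff_id_eq_zero]
  exact ObjectProperty.hom_ext B (hZ.eq_of_src _ _)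

theorem hasBinaryProducts_sub (hsum : ∀ ⦃X Y : A⦄, B X → B Y → B (X ⊞ Y)) :
    HasBinaryProducts (ObjectProperty.FullSubcategory B) := by
  have : ∀ {X' Y' : ObjectProperty.FullSubcategory B}, HasLimit (pair X' Y') := by
    intro X' Y'
    refine HasLimit.mk ⟨BinaryFan.mk
      (P := ⟨X'.obj ⊞ Y'.obj, hsum X'.property Y'.property⟩)
      (ObjectProperty.homMk biprod.fst : _ ⟶ X') (ObjectProperty.homMk biprod.snd : _ ⟶ Y'),
      BinaryFan.isLimitMk (fun s => ObjectProperty.homMk (biprod.lift s.fst.hom s.snd.hom))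
      (fun s => ObjectProperty.hom_ext B (biprod.lift_fst _ _))
      (fun s => ObjectProperty.hom_ext B (biprod.lift_snd _ _))
      (fun s m h1 h2 => ?_)⟩
    have h1A : m.hom ≫ (biprod.fst : X'.obj ⊞ Y'.obj ⟶ X'.obj) = s.fst.hom := congrArg (fun x => x.hom) h1
    have h2A : m.hom ≫ (biprod.snd : X'.obj ⊞ Y'.obj ⟶ Y'.obj) = s.snd.hom := congrArg (fun x => x.hom) h2
    exact ObjectProperty.hom_ext B (biprod.hom_ext m.hom (biprod.lift s.fst.hom s.snd.hom)
      (h1A.trans (biprod.lift_fst _ _).symm) (h2A.trans (biprod.lift_snd _ _).symm))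
  exact hasBinaryProducts_of_hasLimit_pair _


theorem isIso_comparison_congr {D : Type w} [Category.{v} D] {Z₁ Z₂ : HasZeroMorphisms D}
    (K₁ : @HasKernels D _ Z₁) (C₁ : @HasCokernels D _ Z₁)
    (K₂ : @HasKernels D _ Z₂) (C₂ : @HasCokernels D _ Z₂)
    {X Y : D} (f : X ⟶ Y)
    (h : @IsIso D _ _ _ (@Abelian.coimageImageComparison D _ Z₁ X Y f (C₁.has_colimit f) (K₁.has_limit f)
      (K₁.has_limit _) (C₁.has_colimit _))) :
    @IsIso D _ _ _ (@Abelian.coimageImageComparison D _ Z₂ X Y f (C₂.has_colimit f) (K₂.has_limit f)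
      (K₂.has_limit _) (C₂.has_colimit _)) := by
  obtain rfl : Z₁ = Z₂ := HasZeroMorphisms.ext Z₁ Z₂
  obtain rfl : K₁ = K₂ := Subsingleton.elim _ _
  obtain rfl : C₁ = C₂ := Subsingleton.elim _ _
  exact h

theorem comparison_iso_iff (hiso : ClosedUnderIso B)
    (hc : ∀ M : A, ∃ (W : A) (g : W ⟶ M), IsCoreflection B g)
    [HasKernels (ObjectProperty.FullSubcategory B)] [HasCokernels (ObjectProperty.FullSubcategory B)]
    {X Y : A} (hX : B X) (hY : B Y) (f : X ⟶ Y)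
    {P : A} {p : P ⟶ kernel f} (hp : IsPrecover B p)
    (φ : cokernel (image.ι (p ≫ kernel.ι f)) ⟶ image f)
    (hφ : cokernel.π (image.ι (p ≫ kernel.ι f)) ≫ φ = factorThruImage f) :
    IsIso (Abelian.coimageImageComparison
      (ObjectProperty.homMk f : (⟨X, hX⟩ : ObjectProperty.FullSubcategory B) ⟶ ⟨Y, hY⟩)) ↔ IsCoreflection B φ := by
  obtain ⟨hP, hpfac⟩ := hp
  obtain ⟨W, ε, hW, hu⟩ := hc (Abelian.image f)
  -- B-objects and morphisms
  let X' : ObjectProperty.FullSubcategory B := ⟨X, hX⟩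
  let Y' : ObjectProperty.FullSubcategory B := ⟨Y, hY⟩
  let W' : ObjectProperty.FullSubcategory B := ⟨W, hW⟩
  let P' : ObjectProperty.FullSubcategory B := ⟨P, hP⟩
  let fB : X' ⟶ Y' := ObjectProperty.homMk f
  -- basic facts about kp := p ≫ kernel.ι f
  have hkpf : (p ≫ kernel.ι f) ≫ f = 0 := by
    rw [Category.assoc, kernel.condition, comp_zero]
  have hQ₁ : B (cokernel (p ≫ kernel.ι f)) := cokernel_mem hiso hc hP hX _
  let Q₁' : ObjectProperty.FullSubcategory B := ⟨cokernel (p ≫ kernel.ι f), hQ₁⟩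
  let e₀ : cokernel (image.ι (p ≫ kernel.ι f)) ≅ cokernel (p ≫ kernel.ι f) :=
    cokernelImageι (p ≫ kernel.ι f)
  have hπtr : cokernel.π (image.ι (p ≫ kernel.ι f)) ≫ e₀.hom = cokernel.π (p ≫ kernel.ι f) :=
    cokernel.π_desc _ _ _
  -- the coreflection of the (limits) image of f
  have hκ : (Abelian.imageIsoImage f).hom ≫ image.ι f = kernel.ι (cokernel.π f) :=
    Abelian.imageIsoImage_hom_comp_image_ι f
  let εI : W ⟶ image f := ε ≫ (Abelian.imageIsoImage f).hom
  have hεI : IsCoreflection B εI := IsCoreflection.comp_iso ⟨hW, hu⟩ (Abelian.imageIsoImage f)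
  let m₀ : W ⟶ Y := ε ≫ kernel.ι (cokernel.π f)
  have hεIm : εI ≫ image.ι f = m₀ := by
    show (ε ≫ (Abelian.imageIsoImage f).hom) ≫ image.ι f = ε ≫ kernel.ι (cokernel.π f)
    rw [Category.assoc, hκ]
  have hφfac : cokernel.π (image.ι (p ≫ kernel.ι f)) ≫ φ ≫ image.ι f = f := by
    rw [← Category.assoc, hφ, image.fac]
  -- the kernel of fB in B factors through p ≫ kernel.ι f and conversely
  have hιBf : (kernel.ι fB).hom ≫ f = 0 := congrArg (fun x => x.hom) (kernel.condition fB)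
  obtain ⟨a', ha'⟩ := hpfac (kernel fB).property (kernel.lift f _ hιBf)
  have hιB_kp : a' ≫ (p ≫ kernel.ι f) = (kernel.ι fB).hom := by
    rw [← Category.assoc, ha', kernel.lift_ι]
  have hkpfB : (ObjectProperty.homMk (p ≫ kernel.ι f : P ⟶ X) : P' ⟶ X') ≫ fB = 0 :=
    ObjectProperty.hom_ext B hkpf
  have hj : (kernel.lift fB _ hkpfB).hom ≫
      (kernel.ι fB).hom = p ≫ kernel.ι f := congrArg (fun x => x.hom) (kernel.lift_ι fB _ hkpfB)
  -- the cokernel of `kernel.ι fB` in B is Q₁' = cokernel (p ≫ kernel.ι f)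
  have hιπ₁A : (kernel.ι fB).hom ≫ cokernel.π (p ≫ kernel.ι f) = 0 := by
    rw [← hιB_kp, Category.assoc, cokernel.condition, comp_zero]
  have hπ₁0 : kernel.ι fB ≫ (ObjectProperty.homMk (cokernel.π (p ≫ kernel.ι f)) : X' ⟶ Q₁') = 0 :=
    ObjectProperty.hom_ext B hιπ₁A
  have hkpt : ∀ {Z' : ObjectProperty.FullSubcategory B} (t : X' ⟶ Z'), kernel.ι fB ≫ t = 0 →
      (p ≫ kernel.ι f) ≫ t.hom = 0 := by
    intro Z' t ht
    have htA : (kernel.ι fB).hom ≫ t.hom = 0 := congrArg (fun x => x.hom) ht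
    rw [← hj, Category.assoc, htA, comp_zero]
  let Lcoim : IsColimit (CokernelCofork.ofπ _ hπ₁0) :=
    CokernelCofork.IsColimit.ofπ _ hπ₁0
      (fun {Z'} t ht => ObjectProperty.homMk
        (cokernel.desc _ t.hom (hkpt t ht)))
      (fun {Z'} t ht => ObjectProperty.hom_ext B (cokernel.π_desc (p ≫ kernel.ι f) t.hom (hkpt t ht)))
      (fun {Z'} t ht m hm => by
        have hmA : cokernel.π (p ≫ kernel.ι f) ≫
            m.hom = t.hom := congrArg (fun x => x.hom) hm
        apply ObjectProperty.hom_ext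
        show m.hom = cokernel.desc _ t.hom (hkpt t ht)
        exact (cancel_epi (cokernel.π (p ≫ kernel.ι f))).1
          (by rw [cokernel.π_desc]; exact hmA))
  let uQ : Abelian.coimage fB ≅ Q₁' :=
    IsColimit.coconePointUniqueUpToIso (cokernelIsCokernel (kernel.ι fB)) Lcoim
  have huQ : cokernel.π (kernel.ι fB) ≫ uQ.hom =
      (ObjectProperty.homMk (cokernel.π (p ≫ kernel.ι f)) : X' ⟶ Q₁') := by
    simpa using IsColimit.comp_coconePointUniqueUpToIso_hom
      (cokernelIsCokernel (kernel.ι fB)) Lcoim WalkingParallelPair.one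
  -- the kernel of `cokernel.π fB` in B is W'
  have hfπB : f ≫ (cokernel.π fB).hom = 0 :=
    congrArg (fun x => x.hom) (cokernel.condition fB)
  have hcondB : fB ≫ (ObjectProperty.homMk (cokernel.π f) : Y' ⟶ (⟨cokernel f, cokernel_mem hiso hc hX hY f⟩ :
      ObjectProperty.FullSubcategory B)) = 0 := ObjectProperty.hom_ext B (cokernel.condition f)
  have hd₂ : (cokernel.π fB).hom ≫
      (cokernel.desc fB _ hcondB).hom = cokernel.π f :=
    congrArg (fun x => x.hom) (cokernel.π_desc fB _ hcondB)
  have hm₀π : m₀ ≫ cokernel.π f = 0 := by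
    show (ε ≫ kernel.ι (cokernel.π f)) ≫ cokernel.π f = 0
    rw [Category.assoc, kernel.condition, comp_zero]
  have hd₁ : cokernel.π f ≫ cokernel.desc f _ hfπB =
      (cokernel.π fB).hom := cokernel.π_desc f _ hfπB
  have hm₀B : (ObjectProperty.homMk m₀ : W' ⟶ Y') ≫ cokernel.π fB = 0 := by
    apply ObjectProperty.hom_ext
    show m₀ ≫ (cokernel.π fB).hom = 0
    rw [← hd₁, ← Category.assoc, hm₀π, zero_comp]
  have hlift0 : ∀ {Z' : ObjectProperty.FullSubcategory B} (t : Z' ⟶ Y'), t ≫ cokernel.π fB = 0 →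
      t.hom ≫ cokernel.π f = 0 := by
    intro Z' t ht
    have htA : t.hom ≫ (cokernel.π fB).hom = 0 :=
      congrArg (fun x => x.hom) ht
    rw [← hd₂, ← Category.assoc, htA, zero_comp]
  let Lim : IsLimit (KernelFork.ofι (ObjectProperty.homMk m₀ : W' ⟶ Y') hm₀B) :=
    KernelFork.IsLimit.ofι _ hm₀B
      (fun {Z'} t ht => ObjectProperty.homMk
          (hu Z'.property (kernel.lift (cokernel.π f) t.hom (hlift0 t ht))).choose)
      (fun {Z'} t ht => by
        have h1 := (hu Z'.property (kernel.lift (cokernel.π f) t.hom (hlift0 t ht))).choose_spec.1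
        apply ObjectProperty.hom_ext
        show (hu Z'.property (kernel.lift (cokernel.π f) t.hom (hlift0 t ht))).choose ≫
          (ε ≫ kernel.ι (cokernel.π f)) = t.hom
        rw [← Category.assoc, h1, kernel.lift_ι])
      (fun {Z'} t ht m hm => by
        have hmA : m.hom ≫ (ε ≫ kernel.ι (cokernel.π f)) = t.hom := congrArg (fun x => x.hom) hm
        have h5 : m.hom ≫ ε =
            kernel.lift (cokernel.π f) t.hom (hlift0 t ht) := by
          rw [← cancel_mono (kernel.ι (cokernel.π f)), kernel.lift_ι, Category.assoc]
          exact hmA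
        exact ObjectProperty.hom_ext B ((hu Z'.property _).unique h5 (hu Z'.property _).choose_spec.1))
  let uI : Abelian.image fB ≅ W' :=
    IsLimit.conePointUniqueUpToIso (kernelIsKernel (cokernel.π fB)) Lim
  have huI : uI.hom ≫ (ObjectProperty.homMk m₀ : W' ⟶ Y') = kernel.ι (cokernel.π fB) := by
    simpa using IsLimit.conePointUniqueUpToIso_hom_comp
      (kernelIsKernel (cokernel.π fB)) Lim WalkingParallelPair.zero
  have huIinv : uI.inv ≫ kernel.ι (cokernel.π fB) = (ObjectProperty.homMk m₀ : W' ⟶ Y') := by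
    rw [Iso.inv_comp_eq]; exact huI.symm
  constructor
  · -- comparison iso → φ is a coreflection
    intro hcomp
    haveI : IsIso (Abelian.coimageImageComparison fB) := hcomp
    let ψB : Q₁' ⟶ W' := uQ.inv ≫ Abelian.coimageImageComparison fB ≫ uI.hom
    have hψiso : IsIso ψB := show IsIso (uQ.inv ≫ Abelian.coimageImageComparison fB ≫ uI.hom)
      from inferInstance
    obtain ⟨ψBi, hψ3, hψ4⟩ := hψiso.out
    let ψA : cokernel (p ≫ kernel.ι f) ⟶ W := ψB.hom
    have h1 : (ObjectProperty.homMk (cokernel.π (p ≫ kernel.ι f)) : X' ⟶ Q₁') ≫ uQ.inv =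
        cokernel.π (kernel.ι fB) := by
      rw [Iso.comp_inv_eq]; exact huQ.symm
    have hψfacB : (ObjectProperty.homMk (cokernel.π (p ≫ kernel.ι f)) : X' ⟶ Q₁') ≫ ψB ≫
        (ObjectProperty.homMk m₀ : W' ⟶ Y') = fB := by
      show (ObjectProperty.homMk (cokernel.π (p ≫ kernel.ι f)) : X' ⟶ Q₁') ≫
        (uQ.inv ≫ Abelian.coimageImageComparison fB ≫ uI.hom) ≫ (ObjectProperty.homMk m₀ : W' ⟶ Y') = fB
      calc (ObjectProperty.homMk (cokernel.π (p ≫ kernel.ι f)) : X' ⟶ Q₁') ≫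
            (uQ.inv ≫ Abelian.coimageImageComparison fB ≫ uI.hom) ≫ (ObjectProperty.homMk m₀ : W' ⟶ Y')
          = ((ObjectProperty.homMk (cokernel.π (p ≫ kernel.ι f)) : X' ⟶ Q₁') ≫ uQ.inv) ≫
              Abelian.coimageImageComparison fB ≫ (uI.hom ≫ (ObjectProperty.homMk m₀ : W' ⟶ Y')) := by
            simp only [Category.assoc]
        _ = cokernel.π (kernel.ι fB) ≫ Abelian.coimageImageComparison fB ≫
              kernel.ι (cokernel.π fB) := by rw [h1, huI]
        _ = fB := Abelian.coimage_image_factorisation fB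
    have hψA : cokernel.π (p ≫ kernel.ι f) ≫ ψA ≫ m₀ = f := congrArg (fun x => x.hom) hψfacB
    let ψiso : cokernel (p ≫ kernel.ι f) ≅ W :=
      ⟨ψA, ψBi.hom, by exact congrArg (fun x => x.hom) hψ3, by exact congrArg (fun x => x.hom) hψ4⟩
    have hφeq : φ = (e₀.hom ≫ ψA) ≫ εI := by
      rw [← cancel_mono (image.ι f), ← cancel_epi (cokernel.π (image.ι (p ≫ kernel.ι f))),
        hφfac]
      symm
      calc cokernel.π (image.ι (p ≫ kernel.ι f)) ≫ ((e₀.hom ≫ ψA) ≫ εI) ≫ image.ι f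
          = (cokernel.π (image.ι (p ≫ kernel.ι f)) ≫ e₀.hom) ≫ ψA ≫ (εI ≫ image.ι f) := by
            simp only [Category.assoc]
        _ = cokernel.π (p ≫ kernel.ι f) ≫ ψA ≫ m₀ := by rw [hπtr, hεIm]
        _ = f := hψA
    rw [hφeq]
    exact IsCoreflection.iso_comp hiso (e₀ ≪≫ ψiso) hεI
  · -- φ coreflection → comparison iso
    intro hφc
    obtain ⟨σ, hσ⟩ := IsCoreflection.iso_of_coreflections hφc hεI
    let τh : Q₁' ⟶ W' := ObjectProperty.homMk (e₀.inv ≫ σ.hom)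
    let τi : W' ⟶ Q₁' := ObjectProperty.homMk (σ.inv ≫ e₀.hom)
    have hτ1 : τh ≫ τi = 𝟙 Q₁' := by
      apply ObjectProperty.hom_ext
      show (e₀.inv ≫ σ.hom) ≫ (σ.inv ≫ e₀.hom) = 𝟙 (cokernel (p ≫ kernel.ι f))
      simp
    have hτ2 : τi ≫ τh = 𝟙 W' := by
      apply ObjectProperty.hom_ext
      show (σ.inv ≫ e₀.hom) ≫ (e₀.inv ≫ σ.hom) = 𝟙 W
      simp
    have hπinv : cokernel.π (p ≫ kernel.ι f) ≫ e₀.inv =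
        cokernel.π (image.ι (p ≫ kernel.ι f)) := by
      rw [Iso.comp_inv_eq]; exact hπtr.symm
    have keyA : cokernel.π (p ≫ kernel.ι f) ≫ (e₀.inv ≫ σ.hom) ≫ m₀ = f := by
      calc cokernel.π (p ≫ kernel.ι f) ≫ (e₀.inv ≫ σ.hom) ≫ m₀
          = (cokernel.π (p ≫ kernel.ι f) ≫ e₀.inv) ≫ (σ.hom ≫ εI) ≫ image.ι f := by
            rw [← hεIm]; simp only [Category.assoc]
        _ = cokernel.π (image.ι (p ≫ kernel.ι f)) ≫ φ ≫ image.ι f := by rw [hπinv, hσ]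
        _ = f := hφfac
    have key : (ObjectProperty.homMk (cokernel.π (p ≫ kernel.ι f)) : X' ⟶ Q₁') ≫ τh ≫
        (ObjectProperty.homMk m₀ : W' ⟶ Y') = fB := ObjectProperty.hom_ext B keyA
    have hcmp : Abelian.coimageImageComparison fB = uQ.hom ≫ τh ≫ uI.inv := by
      rw [← cancel_mono (kernel.ι (cokernel.π fB)), ← cancel_epi (cokernel.π (kernel.ι fB)),
        Abelian.coimage_image_factorisation]
      symm
      calc cokernel.π (kernel.ι fB) ≫ (uQ.hom ≫ τh ≫ uI.inv) ≫ kernel.ι (cokernel.π fB)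
          = (cokernel.π (kernel.ι fB) ≫ uQ.hom) ≫ τh ≫
              (uI.inv ≫ kernel.ι (cokernel.π fB)) := by simp only [Category.assoc]
        _ = (ObjectProperty.homMk (cokernel.π (p ≫ kernel.ι f)) : X' ⟶ Q₁') ≫ τh ≫
              (ObjectProperty.homMk m₀ : W' ⟶ Y') := by rw [huQ, huIinv]
        _ = fB := key
    show IsIso (Abelian.coimageImageComparison fB)
    rw [hcmp]
    haveI : IsIso τh := ⟨τi, hτ1, hτ2⟩
    infer_instance

end AuxSubcat

/-- Theorem 7.5: a full additive coreflective subcategory `B` of an AB3 abelian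
category is abelian iff for each morphism `f` of `B`, the canonical morphism
`B/tr_B(Ker f) → Im f` is a `B`-coreflection bijection; here `tr_B(Ker f)` is the image of any
`B`-precover of `Ker f`, and the canonical morphism is the unique `φ` with
`cokernel.π ≫ φ = factorThruImage f`. -/
theorem coreflective_abelian_iff
    {A : Type u} [Category.{v} A] [Abelian A] [HasColimits A]
    (B : A → Prop) (hiso : ClosedUnderIso B)
    (hzero : ∃ Z : A, IsZero Z ∧ B Z)
    (hsum : ∀ ⦃X Y : A⦄, B X → B Y → B (X ⊞ Y))
    (hcor : IsCoreflectiveSub B) :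
    Nonempty (Abelian (ObjectProperty.FullSubcategory B)) ↔
      ∀ (X Y : A), B X → B Y → ∀ (f : X ⟶ Y) (P : A) (p : P ⟶ kernel f),
        IsPrecover B p →
        ∀ φ : cokernel (image.ι (p ≫ kernel.ι f)) ⟶ image f,
          cokernel.π (image.ι (p ≫ kernel.ι f)) ≫ φ = factorThruImage f →
          IsCoreflection B φ := by
  have hc : ∀ M : A, ∃ (W : A) (g : W ⟶ M), IsCoreflection B g :=
    fun M => exists_coreflection hcor M
  have mkK : HasKernels (ObjectProperty.FullSubcategory B) :=
    ⟨fun {X'} {Y'} fB => hasKernel_sub hc X'.property Y'.property fB.hom⟩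
  have mkC : HasCokernels (ObjectProperty.FullSubcategory B) :=
    ⟨fun {X'} {Y'} fB => hasCokernel_sub hiso hc X'.property Y'.property fB.hom⟩
  constructor
  · rintro ⟨inst⟩
    intro X Y hX hY f P p hp φ hφ
    letI h1 := mkK
    letI h2 := mkC
    refine (comparison_iso_iff hiso hc hX hY f hp φ hφ).mp ?_
    refine isIso_comparison_congr
      (Z₁ := @Preadditive.preadditiveHasZeroMorphisms _ _ (@Abelian.toPreadditive _ _ inst))
      (K₁ := @Abelian.has_kernels _ _ inst) (C₁ := @Abelian.has_cokernels _ _ inst) h1 h2 _ ?_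
    letI := inst
    infer_instance
  · intro h
    letI h1 := mkK
    letI h2 := mkC
    letI h3 : HasZeroObject (ObjectProperty.FullSubcategory B) := hasZeroObject_sub hzero
    letI h4 : HasBinaryProducts (ObjectProperty.FullSubcategory B) := hasBinaryProducts_sub hsum
    letI h6 : HasFiniteProducts (ObjectProperty.FullSubcategory B) :=
      hasFiniteProducts_of_has_binary_and_terminal
    haveI : ∀ {X' Y' : ObjectProperty.FullSubcategory B} (fB : X' ⟶ Y'),
        IsIso (Abelian.coimageImageComparison fB) := by
      intro X' Y' fB
      obtain ⟨P, p, hpc⟩ := hc (kernel fB.hom)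
      have h1 : (p ≫ kernel.ι fB.hom) ≫
          fB.hom = 0 := by
        rw [Category.assoc, kernel.condition, comp_zero]
      have h2 : image.ι (p ≫ kernel.ι fB.hom) ≫
          fB.hom = 0 := by
        rw [← cancel_epi (factorThruImage (p ≫ kernel.ι fB.hom)),
          comp_zero, ← Category.assoc, image.fac]
        exact h1
      have w : image.ι (p ≫ kernel.ι fB.hom) ≫
          factorThruImage fB.hom = 0 := by
        rw [← cancel_mono (image.ι fB.hom), Category.assoc,
          image.fac, zero_comp]
        exact h2
      have hφ₀ : cokernel.π (image.ι (p ≫ kernel.ι fB.hom)) ≫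
          cokernel.desc _ (factorThruImage fB.hom) w =
          factorThruImage fB.hom := cokernel.π_desc _ _ _
      have hcor := h X'.obj Y'.obj X'.property Y'.property
        fB.hom P p hpc.isPrecover _ hφ₀
      exact (comparison_iso_iff hiso hc X'.property Y'.property
        fB.hom hpc.isPrecover _ hφ₀).mpr hcor
    exact ⟨Abelian.ofCoimageImageComparisonIsIso⟩

end PaperStmt
end

section
/- Let A be an AB3 abelian category and let U be a set of objects of A. For every object A of A, the composed morphism Û_A/tr_U(Ker ε_A) ↠ Û_A/Ker ε_A ↪ A (induced by the canonical morphism ε_A : Û_A → A) is a Pres(U)-precover of A. In particular, Pres(U) is a precovering subcategory of A. -/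
open CategoryTheory Limits

universe w v u

namespace PaperStmt

variable {A : Type u} [Category.{v} A] [Abelian A] [HasColimits A] {ι : Type v}

/-- An object belongs to `Sum(U)`: it is (isomorphic to) a coproduct of objects of
the family `S`. -/
def InSum (S : ι → A) (M : A) : Prop :=
  ∃ (J : Type v) (u : J → ι), Nonempty (M ≅ ∐ fun j => S (u j))

/-- An object belongs to `Gen(U)`: it is an epimorphic image of a coproduct of objects
of the family `S`. -/
def InGen (S : ι → A) (M : A) : Prop :=
  ∃ (J : Type v) (u : J → ι) (π : (∐ fun j => S (u j)) ⟶ M), Epi π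

/-- An object belongs to `Pres(U)`: it is isomorphic to the cokernel of a morphism between
coproducts of objects of the family `S`. -/
def InPres (S : ι → A) (M : A) : Prop :=
  ∃ (J K : Type v) (u : J → ι) (w : K → ι)
    (φ : (∐ fun j => S (u j)) ⟶ (∐ fun k => S (w k))),
    Nonempty (M ≅ cokernel φ)

/-- The canonical object `Û_M = ∐_{U ∈ U} U^(Hom(U,M))`. -/
noncomputable def Uhat (S : ι → A) (M : A) : A :=
  ∐ fun p : (Σ i : ι, (S i ⟶ M)) => S p.1

/-- The canonical morphism `ε_M : Û_M ⟶ M`. -/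
noncomputable def eps (S : ι → A) (M : A) : Uhat S M ⟶ M :=
  Sigma.desc fun p => p.2

/-- The object `tr_U(M)`, i.e. the image of `ε_M`, realizing the trace of `U` in `M`. -/
noncomputable abbrev trObj (S : ι → A) (M : A) : A := image (eps S M)

/-- The inclusion `tr_U(M) ⟶ M`. -/
noncomputable abbrev trIota (S : ι → A) (M : A) : trObj S M ⟶ M := image.ι (eps S M)

/-- The inclusion `tr_U(Ker f) ⟶ X` of the trace of the kernel of `f : X ⟶ Y`. -/
noncomputable def trKerIota (S : ι → A) {X Y : A} (f : X ⟶ Y) :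
    trObj S (kernel f) ⟶ X :=
  trIota S (kernel f) ≫ kernel.ι f

lemma trKerIota_comp (S : ι → A) {X Y : A} (f : X ⟶ Y) : trKerIota S f ≫ f = 0 := by
  simp [trKerIota]

lemma trKerIota_comp_factorThruImage (S : ι → A) {X Y : A} (f : X ⟶ Y) :
    trKerIota S f ≫ factorThruImage f = 0 := by
  rw [← cancel_mono (image.ι f)]
  simp [trKerIota]

/-- The canonical morphism `X/tr_U(Ker f) ⟶ Im f` induced by `f : X ⟶ Y`. -/
noncomputable def coimToIm (S : ι → A) {X Y : A} (f : X ⟶ Y) :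
    cokernel (trKerIota S f) ⟶ image f :=
  cokernel.desc _ (factorThruImage f) (trKerIota_comp_factorThruImage S f)

/-- The canonical morphism `Û_M/tr_U(Ker ε_M) ⟶ M`, which is a `Pres(U)`-precover. -/
noncomputable def presPrecover (S : ι → A) (M : A) :
    cokernel (trKerIota S (eps S M)) ⟶ M :=
  cokernel.desc _ (eps S M) (trKerIota_comp S (eps S M))

/-- The quotient `Ker ε_M / tr_U(Ker ε_M)`. -/
noncomputable def kerModTr (S : ι → A) (M : A) : A :=
  cokernel (trIota S (kernel (eps S M)))

/-- The canonical monomorphism `Ker ε_M / tr_U(Ker ε_M) ⟶ Û_M / tr_U(Ker ε_M)`. -/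
noncomputable def kerModTrToQ (S : ι → A) (M : A) :
    kerModTr S M ⟶ cokernel (trKerIota S (eps S M)) :=
  cokernel.map _ _ (𝟙 _) (kernel.ι (eps S M)) (by simp [trKerIota])

/-- The inclusion of `tr²_U(Ker ε_M)/tr_U(Ker ε_M) = tr_U(Ker ε_M / tr_U(Ker ε_M))` into
`Û_M / tr_U(Ker ε_M)`. -/
noncomputable def tr2Incl (S : ι → A) (M : A) :
    trObj S (kerModTr S M) ⟶ cokernel (trKerIota S (eps S M)) :=
  trIota S (kerModTr S M) ≫ kerModTrToQ S M

/-- The quotient `Û_M / tr²_U(Ker ε_M)`. -/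
noncomputable def UhatModTr2 (S : ι → A) (M : A) : A :=
  cokernel (tr2Incl S M)

/-- The quotient `Ker ε_M / tr²_U(Ker ε_M)`. -/
noncomputable def kerModTr2 (S : ι → A) (M : A) : A :=
  cokernel (trIota S (kerModTr S M))

end PaperStmt

namespace PaperStmt

section Aux

variable {A : Type u} [Category.{v} A] [Abelian A] [HasColimits A] {ι : Type v}

lemma inPres_cokernel_trKerIota (S : ι → A) (M : A) :
    InPres S (cokernel (trKerIota S (eps S M))) := by
  refine ⟨Σ i : ι, (S i ⟶ kernel (eps S M)), Σ i : ι, (S i ⟶ M),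
    Sigma.fst, Sigma.fst, eps S (kernel (eps S M)) ≫ kernel.ι (eps S M), ?_⟩
  have hρ : eps S (kernel (eps S M)) ≫ kernel.ι (eps S M) =
      factorThruImage (eps S (kernel (eps S M))) ≫ trKerIota S (eps S M) := by
    simp [trKerIota]
  exact ⟨(cokernelEpiComp (factorThruImage (eps S (kernel (eps S M))))
      (trKerIota S (eps S M))).symm ≪≫ (cokernelIsoOfEq hρ).symm⟩

lemma presPrecover_isPrecover_aux (S : ι → A) (M : A) :
    IsPrecover (InPres S) (presPrecover S M) := by
  constructor
  · exact inPres_cokernel_trKerIota S M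
  · rintro Y ⟨J, K, u, w, φ, ⟨e⟩⟩ g
    set q : (∐ fun k => S (w k)) ⟶ M := cokernel.π φ ≫ e.inv ≫ g with hq
    set ψ : (∐ fun k => S (w k)) ⟶ Uhat S M :=
      Sigma.desc (fun k => Sigma.ι (fun p : Σ i : ι, (S i ⟶ M) => S p.1)
        ⟨w k, Sigma.ι (fun k => S (w k)) k ≫ q⟩) with hψdef
    have hψ : ψ ≫ eps S M = q := by
      ext k
      rw [hψdef, eps]
      erw [Sigma.ι_desc_assoc, Sigma.ι_desc]
    have hφψ : (φ ≫ ψ) ≫ eps S M = 0 := by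
      rw [Category.assoc, hψ, hq, cokernel.condition_assoc, zero_comp]
    set θ : (∐ fun j => S (u j)) ⟶ kernel (eps S M) :=
      kernel.lift _ (φ ≫ ψ) hφψ with hθdef
    have hθ : θ ≫ kernel.ι (eps S M) = φ ≫ ψ := kernel.lift_ι _ _ _
    set θ' : (∐ fun j => S (u j)) ⟶ Uhat S (kernel (eps S M)) :=
      Sigma.desc (fun j => Sigma.ι (fun p : Σ i : ι, (S i ⟶ kernel (eps S M)) => S p.1)
        ⟨u j, Sigma.ι (fun j => S (u j)) j ≫ θ⟩) with hθ'def
    have hθ' : θ' ≫ eps S (kernel (eps S M)) = θ := by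
      refine Sigma.hom_ext _ _ (fun j => ?_)
      rw [hθ'def]
      erw [Sigma.ι_desc_assoc]
      exact Sigma.ι_desc (fun p : Σ i : ι, (S i ⟶ kernel (eps S M)) => p.2) _
    have hfac : φ ≫ ψ =
        (θ' ≫ factorThruImage (eps S (kernel (eps S M)))) ≫ trKerIota S (eps S M) := by
      rw [← hθ, ← hθ']
      simp [trKerIota]
    have hzero : φ ≫ ψ ≫ cokernel.π (trKerIota S (eps S M)) = 0 := by
      rw [← Category.assoc, hfac, Category.assoc, cokernel.condition, comp_zero]
    set h₀ : cokernel φ ⟶ cokernel (trKerIota S (eps S M)) :=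
      cokernel.desc φ (ψ ≫ cokernel.π _) hzero with hh₀
    refine ⟨e.hom ≫ h₀, ?_⟩
    have key : h₀ ≫ presPrecover S M = e.inv ≫ g := by
      rw [← cancel_epi (cokernel.π φ)]
      rw [← Category.assoc, hh₀, cokernel.π_desc, Category.assoc]
      rw [presPrecover, cokernel.π_desc, hψ, hq]
    rw [Category.assoc, key, e.hom_inv_id_assoc]

end Aux

/-- Lemma 8.4: for every object `M`, the canonical morphism
`Û_M/tr_U(Ker ε_M) ⟶ M` induced by `ε_M` is a `Pres(U)`-precover of `M`; in particular,
`Pres(U)` is a precovering subcategory of `A`. -/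
theorem presPrecover_isPrecover
    {A : Type u} [Category.{v} A] [Abelian A] [HasColimits A]
    {ι : Type v} (S : ι → A) :
    (∀ M : A, IsPrecover (InPres S) (presPrecover S M)) ∧ Precovering (InPres S) :=
  ⟨fun M => presPrecover_isPrecover_aux S M,
   fun M => ⟨_, presPrecover S M, presPrecover_isPrecover_aux S M⟩⟩

end PaperStmt
end

section
/- Let U be a set of objects of an AB3 abelian category A and set B = Pres(U). A morphism p : B_A → A with B_A in B is a B-coreflection if and only if Hom(U, p) : Hom(U, B_A) → Hom(U, A) is a bijection for every U ∈ U. In particular, a morphism f : B → B' between objects of B is an isomorphism if and only if Hom(U, f) is a bijection for every U ∈ U. -/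
open CategoryTheory Limits

universe w v u

namespace PaperStmt

section Aux

variable {A : Type u} [Category.{v} A] [Abelian A] [HasColimits A] {ι : Type v}

/-- Each `S i` belongs to `Pres(U)`. -/
lemma inPres_S (S : ι → A) (i : ι) : InPres S (S i) := by
  refine ⟨PEmpty.{v+1}, PUnit.{v+1}, PEmpty.elim, fun _ => i, 0, ⟨?_⟩⟩
  refine Iso.trans ?_ cokernelZeroIsoTarget.symm
  exact
    { hom := Sigma.ι (fun _ : PUnit.{v+1} => S i) PUnit.unit
      inv := Sigma.desc fun _ => 𝟙 (S i)
      hom_inv_id := by simp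
      inv_hom_id := by ext ⟨⟩; simp }

lemma bij_sigma (S : ι → A) {BA M : A} (p : BA ⟶ M)
    (h : ∀ i : ι, Function.Bijective (fun g : S i ⟶ BA => g ≫ p))
    (J : Type v) (u : J → ι) :
    Function.Bijective (fun g : (∐ fun j => S (u j)) ⟶ BA => g ≫ p) := by
  constructor
  · intro f₁ f₂ hf
    ext j
    exact (h (u j)).1 (by simpa using congrArg (fun t => Sigma.ι (fun j => S (u j)) j ≫ t) hf)
  · intro g
    refine ⟨Sigma.desc fun j => ((h (u j)).2 (Sigma.ι (fun j => S (u j)) j ≫ g)).choose, ?_⟩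
    ext j
    simpa using ((h (u j)).2 (Sigma.ι (fun j => S (u j)) j ≫ g)).choose_spec

lemma bij_pres (S : ι → A) {BA M : A} (p : BA ⟶ M)
    (h : ∀ i : ι, Function.Bijective (fun g : S i ⟶ BA => g ≫ p))
    {Y : A} (hY : InPres S Y) :
    Function.Bijective (fun g : Y ⟶ BA => g ≫ p) := by
  obtain ⟨J, K, u, w, φ, ⟨e⟩⟩ := hY
  have hc : Function.Bijective (fun g : cokernel φ ⟶ BA => g ≫ p) := by
    constructor
    · intro f₁ f₂ hf
      refine (cancel_epi (cokernel.π φ)).1 ?_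
      refine (bij_sigma S p h K w).1 ?_
      simp only [Category.assoc]
      exact congrArg (fun t => cokernel.π φ ≫ t) hf
    · intro g
      obtain ⟨h₂, hh₂⟩ := (bij_sigma S p h K w).2 (cokernel.π φ ≫ g)
      have hz : φ ≫ h₂ = 0 := by
        refine (bij_sigma S p h J u).1 ?_
        show (φ ≫ h₂) ≫ p = 0 ≫ p
        rw [Category.assoc, show h₂ ≫ p = cokernel.π φ ≫ g from hh₂]
        simp
      refine ⟨cokernel.desc φ h₂ hz, ?_⟩
      refine (cancel_epi (cokernel.π φ)).1 ?_
      simpa using hh₂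
  have heq : (fun g : Y ⟶ BA => g ≫ p) =
      (e.homCongr (Iso.refl M)).symm ∘ (fun g : cokernel φ ⟶ BA => g ≫ p) ∘
        (e.homCongr (Iso.refl BA)) := by
    funext g
    simp [Iso.homCongr]
  rw [heq]
  exact ((e.homCongr (Iso.refl M)).symm.bijective.comp hc).comp
    (e.homCongr (Iso.refl BA)).bijective

end Aux

/-- Lemma 8.5: a morphism `p : B_A ⟶ A` with `B_A ∈ Pres(U)` is a
`Pres(U)`-coreflection iff `Hom(U, p)` is bijective for every `U ∈ U`; in particular, a
morphism in `Pres(U)` is an isomorphism iff `Hom(U, f)` is bijective for every `U ∈ U`. -/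
theorem pres_coreflection_iff_hom_bijective
    {A : Type u} [Category.{v} A] [Abelian A] [HasColimits A]
    {ι : Type v} (S : ι → A) :
    (∀ (BA M : A), InPres S BA → ∀ p : BA ⟶ M,
      (IsCoreflection (InPres S) p ↔
        ∀ i : ι, Function.Bijective (fun g : S i ⟶ BA => g ≫ p))) ∧
    (∀ (X Y : A), InPres S X → InPres S Y → ∀ f : X ⟶ Y,
      (IsIso f ↔ ∀ i : ι, Function.Bijective (fun g : S i ⟶ X => g ≫ f))) := by
  have main : ∀ (BA M : A), InPres S BA → ∀ p : BA ⟶ M,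
      (IsCoreflection (InPres S) p ↔
        ∀ i : ι, Function.Bijective (fun g : S i ⟶ BA => g ≫ p)) := by
    intro BA M hBA p
    constructor
    · rintro ⟨-, hcor⟩ i
      constructor
      · intro g₁ g₂ hg
        obtain ⟨h, -, huniq⟩ := hcor (inPres_S S i) (g₁ ≫ p)
        exact (huniq g₁ rfl).trans (huniq g₂ hg.symm).symm
      · intro g
        obtain ⟨h, hh, -⟩ := hcor (inPres_S S i) g
        exact ⟨h, hh⟩
    · intro hbij
      refine ⟨hBA, fun Y hY g => ?_⟩
      have hb := bij_pres S p hbij hY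
      obtain ⟨h, hh⟩ := hb.2 g
      exact ⟨h, hh, fun h' hh' => hb.1 (hh'.trans hh.symm)⟩
  refine ⟨main, fun X Y hX hY f => ?_⟩
  constructor
  · intro hf i
    constructor
    · intro g₁ g₂ hg
      exact (cancel_mono f).1 hg
    · intro g
      exact ⟨g ≫ inv f, by simp⟩
  · intro hbij
    have hcor := (main X Y hX f).2 hbij
    obtain ⟨s, hs, -⟩ := hcor.2 hY (𝟙 Y)
    have hsf : f ≫ s = 𝟙 X := by
      obtain ⟨h, -, huniq⟩ := hcor.2 hX f
      exact (huniq (f ≫ s) (show (f ≫ s) ≫ f = f by rw [Category.assoc, hs, Category.comp_id])).trans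
        (huniq (𝟙 X) (by simp)).symm
    exact ⟨⟨s, hsf, hs⟩⟩

end PaperStmt
end
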